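/- Every rigged configuration (ν, J) produced by the bijection Φ from a path of length L satisfies, for every string (ν_i, J_i), the inequality J_i ≤ P_{ν_i}(L, ν), where P_ℓ(L, ν) = L − 2Q_ℓ(ν) is the vacancy number. -/

import Mathlib

/-- `Q_ℓ(ν)`: the number of boxes in the leftmost `ℓ` columns of the configuration,
where a rigged configuration is a list of strings (row length, rigging). -/
def Qcol (ℓ : ℕ) (ν : List (ℕ × ℤ)) : ℕ := (ν.map fun s => min s.1 ℓ).sum

/-- The vacancy number `P_ℓ(k, ν) = k - 2 Q_ℓ(ν)`. -/
def vac (ℓ k : ℕ) (ν : List (ℕ × ℤ)) : ℤ := (k : ℤ) - 2 * (Qcol ℓ ν : ℤ)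

/-- Replace the first element satisfying `p` using `f`. -/
def replaceFirst (p : ℕ × ℤ → Bool) (f : ℕ × ℤ → ℕ × ℤ) : List (ℕ × ℤ) → List (ℕ × ℤ)
  | [] => []
  | x :: xs => if p x then f x :: xs else x :: replaceFirst p f xs

/-- One step of the rigged configuration bijection `Φ`, processing a ball at
position `k`: add a box to a longest singular string (or create a new length-one
row if there is no singular string) and make the changed string singular with
respect to the new vacancy numbers. -/
def phiStep (k : ℕ) (ν : List (ℕ × ℤ)) : List (ℕ × ℤ) :=
  let isSing : ℕ × ℤ → Bool := fun s => decide (s.2 = vac s.1 (k - 1) ν)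
  let sing := ν.filter isSing
  if sing.isEmpty then
    ν ++ [(1, vac 1 k (ν ++ [(1, 0)]))]
  else
    let m := (sing.map Prod.fst).foldr max 0
    let p : ℕ × ℤ → Bool := fun s => isSing s && decide (s.1 = m)
    let shape := replaceFirst p (fun s => (s.1 + 1, s.2)) ν
    replaceFirst p (fun s => (s.1 + 1, vac (m + 1) k shape)) ν

/-- The rigged configuration bijection `Φ`, applied to the (increasing) list of
ball positions of a path in `(B^{1,1})^{⊗ L}`. -/
def Phi (ks : List ℕ) : List (ℕ × ℤ) := ks.foldl (fun ν k => phiStep k ν) []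

/-! ### Auxiliary lemmas -/

lemma Qcol_cons (ℓ : ℕ) (x : ℕ × ℤ) (l : List (ℕ × ℤ)) :
    Qcol ℓ (x :: l) = min x.1 ℓ + Qcol ℓ l := by simp [Qcol]

lemma Qcol_append (ℓ : ℕ) (l1 l2 : List (ℕ × ℤ)) :
    Qcol ℓ (l1 ++ l2) = Qcol ℓ l1 + Qcol ℓ l2 := by simp [Qcol]

lemma vac_mono (ℓ k k' : ℕ) (ν : List (ℕ × ℤ)) (h : k ≤ k') :
    vac ℓ k ν ≤ vac ℓ k' ν := by unfold vac; omega

lemma mem_replaceFirst (p : ℕ × ℤ → Bool) (f : ℕ × ℤ → ℕ × ℤ) :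
    ∀ (l : List (ℕ × ℤ)) (s : ℕ × ℤ), s ∈ replaceFirst p f l →
      s ∈ l ∨ ∃ a ∈ l, p a = true ∧ s = f a
  | [], s, h => by simp [replaceFirst] at h
  | x :: xs, s, h => by
    rw [replaceFirst] at h
    by_cases hx : p x
    · rw [if_pos hx] at h
      rcases List.mem_cons.mp h with h | h
      · exact Or.inr ⟨x, List.mem_cons_self, hx, h⟩
      · exact Or.inl (List.mem_cons_of_mem _ h)
    · rw [if_neg hx] at h
      rcases List.mem_cons.mp h with h | h
      · exact Or.inl (h ▸ List.mem_cons_self)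
      · rcases mem_replaceFirst p f xs s h with h | ⟨a, ha, hpa, hs⟩
        · exact Or.inl (List.mem_cons_of_mem _ h)
        · exact Or.inr ⟨a, List.mem_cons_of_mem _ ha, hpa, hs⟩

lemma Qcol_replaceFirst (ℓ m : ℕ) (p : ℕ × ℤ → Bool) (f : ℕ × ℤ → ℕ × ℤ)
    (hf : ∀ a, (f a).1 = a.1 + 1) (hp : ∀ a, p a = true → a.1 = m) :
    ∀ l : List (ℕ × ℤ), (∃ a ∈ l, p a = true) →
      Qcol ℓ (replaceFirst p f l) + min m ℓ = Qcol ℓ l + min (m + 1) ℓ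
  | [], h => by simp at h
  | x :: xs, h => by
    rw [replaceFirst]
    by_cases hx : p x
    · rw [if_pos hx, Qcol_cons, Qcol_cons, hf, hp x hx]
      omega
    · rw [if_neg hx, Qcol_cons, Qcol_cons]
      have hex : ∃ a ∈ xs, p a = true := by
        rcases h with ⟨a, ha, hpa⟩
        rcases List.mem_cons.mp ha with rfl | ha
        · exact absurd hpa (by simp [hx])
        · exact ⟨a, ha, hpa⟩
      have := Qcol_replaceFirst ℓ m p f hf hp xs hex
      omega

lemma le_foldr_max : ∀ (l : List ℕ), ∀ x ∈ l, x ≤ l.foldr max 0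
  | [], x, h => by simp at h
  | a :: l, x, h => by
    rcases List.mem_cons.mp h with rfl | h
    · exact le_max_left _ _
    · exact le_trans (le_foldr_max l x h) (le_max_right _ _)

lemma foldr_max_mem (l : List ℕ) (h : l.foldr max 0 ≠ 0) : l.foldr max 0 ∈ l := by
  induction l with
  | nil => simp at h
  | cons a l ih =>
    simp only [List.foldr_cons] at h ⊢
    rcases le_total (l.foldr max 0) a with hle | hle
    · rw [max_eq_left hle]; exact List.mem_cons_self
    · rw [max_eq_right hle] at h ⊢; exact List.mem_cons_of_mem _ (ih h)

/-- The key step lemma: one step of `Φ` preserves positivity of row lengths and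
the invariant that every rigging is at most the current vacancy number. -/
lemma phiStep_inv (k : ℕ) (hk : 1 ≤ k) (ν : List (ℕ × ℤ))
    (hpos : ∀ s ∈ ν, 1 ≤ s.1)
    (hinv : ∀ s ∈ ν, s.2 ≤ vac s.1 (k - 1) ν) :
    (∀ s ∈ phiStep k ν, 1 ≤ s.1) ∧
    (∀ s ∈ phiStep k ν, s.2 ≤ vac s.1 k (phiStep k ν)) := by
  by_cases he : (ν.filter (fun s => decide (s.2 = vac s.1 (k - 1) ν))).isEmpty
  · -- no singular string: append a new row of length 1
    have hstep : phiStep k ν = ν ++ [(1, vac 1 k (ν ++ [(1, 0)]))] := by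
      simp only [phiStep]; rw [if_pos he]
    have hns : ∀ s ∈ ν, s.2 ≠ vac s.1 (k - 1) ν := by
      intro s hs
      have := List.isEmpty_iff.mp he
      rw [List.filter_eq_nil_iff] at this
      simpa using this s hs
    rw [hstep]
    constructor
    · intro s hs
      rcases List.mem_append.mp hs with hs | hs
      · exact hpos s hs
      · simp only [List.mem_singleton] at hs
        subst hs
        exact le_refl 1
    · intro s hs
      have hQ : ∀ ℓ, Qcol ℓ (ν ++ [(1, vac 1 k (ν ++ [(1, 0)]))]) = Qcol ℓ ν + min 1 ℓ := by
        intro ℓ; rw [Qcol_append]; simp [Qcol]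
      rcases List.mem_append.mp hs with hs' | hs'
      · have h1 := hinv s hs'
        have h2 := hns s hs'
        have h3 := hpos s hs'
        have hm : min 1 s.1 = 1 := by omega
        unfold vac at *
        rw [hQ s.1, hm]
        omega
      · simp only [List.mem_singleton] at hs'
        subst hs'
        have hQ0 : Qcol 1 (ν ++ [((1 : ℕ), (0 : ℤ))]) = Qcol 1 ν + 1 := by
          rw [Qcol_append]; simp [Qcol]
        have hQ1 := hQ 1
        simp only
        unfold vac at *
        omega
  · -- there is a singular string: add a box to the longest one
    set isSing : ℕ × ℤ → Bool := fun s => decide (s.2 = vac s.1 (k - 1) ν) with hisSing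
    set sing := ν.filter isSing with hsing
    set m := (sing.map Prod.fst).foldr max 0 with hm
    set p : ℕ × ℤ → Bool := fun s => isSing s && decide (s.1 = m) with hp
    set shape := replaceFirst p (fun s => (s.1 + 1, s.2)) ν with hshape
    set ν' := replaceFirst p (fun s => (s.1 + 1, vac (m + 1) k shape)) ν with hν'
    have hstep : phiStep k ν = ν' := by
      simp only [phiStep]; rw [if_neg he]
    -- basic facts about singular strings and m
    have hsing_mem : ∀ b ∈ sing, b ∈ ν ∧ b.2 = vac b.1 (k - 1) ν := by
      intro b hb
      have := List.mem_filter.mp hb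
      exact ⟨this.1, by simpa [hisSing] using this.2⟩
    have hle_m : ∀ b ∈ sing, b.1 ≤ m := by
      intro b hb
      exact le_foldr_max _ _ (List.mem_map_of_mem (f := Prod.fst) hb)
    have hne : sing ≠ [] := by
      intro h; rw [h] at he; simp at he
    obtain ⟨a0, ha0⟩ := List.exists_mem_of_ne_nil sing hne
    have hm1 : 1 ≤ m :=
      le_trans (hpos a0 (hsing_mem a0 ha0).1) (hle_m a0 ha0)
    have hmmem : m ∈ sing.map Prod.fst := foldr_max_mem _ (by omega)
    obtain ⟨b, hb, hbm⟩ := List.mem_map.mp hmmem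
    have hex : ∃ a ∈ ν, p a = true := by
      refine ⟨b, (hsing_mem b hb).1, ?_⟩
      have hbs : isSing b = true := (List.mem_filter.mp hb).2
      simp [hp, hbs, hbm]
    have hpm : ∀ a, p a = true → a.1 = m := by
      intro a ha
      have := (Bool.and_eq_true _ _).mp ha
      simpa using this.2
    have hQsh : ∀ ℓ, Qcol ℓ shape + min m ℓ = Qcol ℓ ν + min (m + 1) ℓ :=
      fun ℓ => Qcol_replaceFirst ℓ m p _ (fun a => rfl) hpm ν hex
    have hQν' : ∀ ℓ, Qcol ℓ ν' + min m ℓ = Qcol ℓ ν + min (m + 1) ℓ :=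
      fun ℓ => Qcol_replaceFirst ℓ m p _ (fun a => rfl) hpm ν hex
    have hQeq : ∀ ℓ, Qcol ℓ shape = Qcol ℓ ν' := by
      intro ℓ; have := hQsh ℓ; have := hQν' ℓ; omega
    rw [hstep]
    constructor
    · intro s hs
      rcases mem_replaceFirst _ _ _ _ hs with hs | ⟨a, ha, hpa, rfl⟩
      · exact hpos s hs
      · simp
    · intro s hs
      rcases mem_replaceFirst _ _ _ _ hs with hs' | ⟨a, ha, hpa, rfl⟩
      · -- an unchanged string
        have h1 := hinv s hs'
        have hQ := hQν' s.1
        by_cases hsm : s.1 ≤ m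
        · have hmin1 : min m s.1 = s.1 := by omega
          have hmin2 : min (m + 1) s.1 = s.1 := by omega
          unfold vac at *
          omega
        · -- s has length > m, hence cannot be singular
          have h2 : s.2 ≠ vac s.1 (k - 1) ν := by
            intro hsingular
            have hsmem : s ∈ sing := by
              rw [hsing]
              exact List.mem_filter.mpr ⟨hs', by simp [hisSing, hsingular]⟩
            exact absurd (hle_m s hsmem) (by omega)
          have hmin1 : min m s.1 = m := by omega
          have hmin2 : min (m + 1) s.1 = m + 1 := by omega
          unfold vac at *
          omega
      · -- the changed string: its rigging equals the new vacancy number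
        have ham := hpm a hpa
        simp only [ham]
        have hQ := hQeq (m + 1)
        unfold vac
        rw [hQ]
    
/-- The invariant is preserved along the fold defining `Φ`. -/
lemma fold_inv : ∀ (ks : List ℕ) (k0 : ℕ) (ν : List (ℕ × ℤ)),
    ks.Pairwise (· < ·) → (∀ x ∈ ks, k0 < x) →
    (∀ s ∈ ν, 1 ≤ s.1) → (∀ s ∈ ν, s.2 ≤ vac s.1 k0 ν) →
    ∀ L : ℕ, (∀ x ∈ ks, x ≤ L) → k0 ≤ L →
      ∀ s ∈ ks.foldl (fun ν k => phiStep k ν) ν,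
        s.2 ≤ vac s.1 L (ks.foldl (fun ν k => phiStep k ν) ν)
  | [], k0, ν, _, _, _, hinv, L, _, hk0L => by
      intro s hs
      exact le_trans (hinv s hs) (vac_mono _ _ _ _ hk0L)
  | k :: ks, k0, ν, hsort, hgt, hpos, hinv, L, hle, hk0L => by
      have hk : 1 ≤ k := by have := hgt k (List.mem_cons_self); omega
      have hinv' : ∀ s ∈ ν, s.2 ≤ vac s.1 (k - 1) ν := by
        intro s hs
        refine le_trans (hinv s hs) (vac_mono _ _ _ _ ?_)
        have := hgt k (List.mem_cons_self); omega
      obtain ⟨hpos2, hinv2⟩ := phiStep_inv k hk ν hpos hinv'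
      have hs' := List.pairwise_cons.mp hsort
      exact fold_inv ks k (phiStep k ν) hs'.2 hs'.1 hpos2 hinv2 L
        (fun x hx => hle x (List.mem_cons_of_mem _ hx))
        (hle k (List.mem_cons_self))

/-- Every rigged configuration produced by `Φ` from a path of length `L` satisfies
`J_i ≤ P_{ν_i}(L, ν)` for every string `(ν_i, J_i)`. -/
theorem phi_rigging_le_vacancy (L : ℕ) (ks : List ℕ) (hsort : ks.Pairwise (· < ·))
    (hrange : ∀ x ∈ ks, 1 ≤ x ∧ x ≤ L) :
    ∀ s ∈ Phi ks, s.2 ≤ vac s.1 L (Phi ks) := by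
  have := fold_inv ks 0 [] hsort (fun x hx => (hrange x hx).1)
    (by simp) (by simp) L (fun x hx => (hrange x hx).2) (Nat.zero_le L)
  simpa [Phi] using this
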